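/- Let θ̄ ∈ ℝ^d, let ℓ ∈ ℝ with ℓ > inf_{x ∈ ℝ^d} ψ*(x), and set D = {x ∈ ℝ^d : ψ*(x) ≤ ℓ}. Suppose ‖∇ψ*(x)‖₂ ≥ ‖θ̄‖₂ for every point x on the topological boundary of D. Then there exists a point x̄ ∈ D with ∇ψ*(x̄) = θ̄. -/

import Mathlib

open Filter Topology InnerProductSpace RealInnerProductSpace

lemma dir_slope {d : ℕ} {ψ : EuclideanSpace ℝ (Fin d) → ℝ} {g x : EuclideanSpace ℝ (Fin d)}
    (h : HasGradientAt ψ g x) (w : EuclideanSpace ℝ (Fin d)) :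
    Tendsto (fun t : ℝ => (ψ (x + t • w) - ψ x) / t) (𝓝[>] 0) (𝓝 ⟪g, w⟫_ℝ) := by
  have hline : HasDerivAt (fun t : ℝ => x + t • w) w 0 := by
    simpa using ((hasDerivAt_id (0:ℝ)).smul_const w).const_add x
  have hd : HasDerivAt (fun t : ℝ => ψ (x + t • w)) ⟪g, w⟫_ℝ 0 := by
    have := (by simpa using h.hasFDerivAt :
      HasFDerivAt ψ ((toDual ℝ _) g) ((fun t : ℝ => x + t • w) 0)).comp_hasDerivAt 0 hline
    simpa [Function.comp_def, toDual_apply_apply] using this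
  have := (hasDerivAt_iff_tendsto_slope.1 hd).mono_left
    (nhdsWithin_mono 0 (by intro t ht; exact ne_of_gt ht : Set.Ioi (0:ℝ) ⊆ {(0:ℝ)}ᶜ))
  refine this.congr' ?_
  filter_upwards [self_mem_nhdsWithin] with t ht
  simp [slope, (show (0:ℝ) < t from ht).ne']
  ring



/-- Let `ψ*` be convex, differentiable and co-finite, let `θ̄ ∈ ℝ^d`, let
`ℓ > inf ψ*`, and set `D = {x : ψ*(x) ≤ ℓ}`.  If `‖∇ψ*(x)‖₂ ≥ ‖θ̄‖₂` on the boundary of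
`D`, then there exists `x̄ ∈ D` with `∇ψ*(x̄) = θ̄`. -/
theorem stmt_16
    (d : ℕ)
    (ψs : EuclideanSpace ℝ (Fin d) → ℝ)
    (hψs_conv : ConvexOn ℝ Set.univ ψs)
    (gradψs : EuclideanSpace ℝ (Fin d) → EuclideanSpace ℝ (Fin d))
    (hψs_grad : ∀ x, HasGradientAt ψs (gradψs x) x)
    -- co-finiteness: `ψ*(x)/‖x‖₂ → +∞` as `‖x‖₂ → +∞`
    (hcofin : Filter.Tendsto (fun x : EuclideanSpace ℝ (Fin d) => ψs x / ‖x‖)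
      (Filter.comap (fun x : EuclideanSpace ℝ (Fin d) => ‖x‖) Filter.atTop) Filter.atTop)
    (θb : EuclideanSpace ℝ (Fin d))
    (ℓ : ℝ) (hℓ : sInf (Set.range ψs) < ℓ)
    (D : Set (EuclideanSpace ℝ (Fin d)))
    (hD : D = {x : EuclideanSpace ℝ (Fin d) | ψs x ≤ ℓ})
    (hbd : ∀ x ∈ frontier D, ‖θb‖ ≤ ‖gradψs x‖) :
    ∃ xb ∈ D, gradψs xb = θb := by
  -- continuity of ψs
  have hcont : Continuous ψs := continuous_iff_continuousAt.2
    fun x => (hψs_grad x).hasFDerivAt.differentiableAt.continuousAt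
  -- Slater point
  have hx0 : ∃ x₀, ψs x₀ < ℓ := by
    by_contra h
    push_neg at h
    exact absurd (le_csInf (Set.range_nonempty ψs) (by rintro y ⟨x, rfl⟩; exact h x))
      (not_le.2 hℓ)
  obtain ⟨x₀, hx₀⟩ := hx0
  -- D is closed
  have hDclosed : IsClosed D := hD ▸ isClosed_le hcont continuous_const
  -- D is bounded
  have h1 : ∀ᶠ r in atTop, ∀ x : EuclideanSpace ℝ (Fin d), ‖x‖ = r → |ℓ| + 1 ≤ ψs x / ‖x‖ :=
    Filter.eventually_comap.mp (hcofin.eventually (Filter.eventually_ge_atTop (|ℓ| + 1)))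
  obtain ⟨R, hR⟩ := Filter.eventually_atTop.1 h1
  have hDsub : D ⊆ Metric.closedBall 0 (max R 1) := by
    intro x hx
    rw [hD] at hx
    simp only [Metric.mem_closedBall, dist_zero_right]
    by_contra hxn
    push_neg at hxn
    have hx1 : (1:ℝ) ≤ ‖x‖ := le_trans (le_max_right R 1) hxn.le
    have hxR : R ≤ ‖x‖ := le_trans (le_max_left R 1) hxn.le
    have h2 := hR ‖x‖ hxR x rfl
    have h3 : ψs x / ‖x‖ ≤ |ℓ| := by
      rw [div_le_iff₀ (by linarith : (0:ℝ) < ‖x‖)]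
      calc ψs x ≤ ℓ := hx
        _ ≤ |ℓ| := le_abs_self ℓ
        _ ≤ |ℓ| * ‖x‖ := le_mul_of_one_le_right (abs_nonneg ℓ) hx1
    linarith
  have hDcomp : IsCompact D := Metric.isCompact_of_isClosed_isBounded hDclosed
    (Metric.isBounded_closedBall.subset hDsub)
  have hDne : D.Nonempty := ⟨x₀, by rw [hD]; exact le_of_lt hx₀⟩
  -- minimize f over D
  set f : EuclideanSpace ℝ (Fin d) → ℝ := fun x => ψs x - ⟪θb, x⟫_ℝ with hf
  have hfcont : Continuous f := hcont.sub (innerSL ℝ θb).continuous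
  obtain ⟨xb, hxbD, hmin⟩ := hDcomp.exists_isMinOn hDne hfcont.continuousOn
  refine ⟨xb, hxbD, ?_⟩
  -- fderiv of f
  have hF : HasFDerivAt f ((toDual ℝ _) (gradψs xb - θb)) xb := by
    have h2 : HasFDerivAt (fun x => ⟪θb, x⟫_ℝ) ((toDual ℝ _) θb) xb := by
      have := ((toDual ℝ (EuclideanSpace ℝ (Fin d))) θb).hasFDerivAt (x := xb)
      refine this.congr_of_eventuallyEq (Filter.Eventually.of_forall fun y => ?_)
      simp [toDual_apply_apply]
    simpa [map_sub, Pi.sub_def] using (hψs_grad xb).hasFDerivAt.sub h2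
  by_cases hint : xb ∈ interior D
  · -- interior case
    have hloc : IsLocalMin f xb := hmin.isLocalMin (mem_interior_iff_mem_nhds.1 hint)
    have h0 := hloc.hasFDerivAt_eq_zero hF
    have : gradψs xb - θb = 0 := by
      apply (toDual ℝ (EuclideanSpace ℝ (Fin d))).injective
      simpa using h0
    exact sub_eq_zero.1 this
  · -- frontier case
    have hfr : xb ∈ frontier D := by
      rw [frontier, hDclosed.closure_eq]
      exact ⟨hxbD, hint⟩
    -- ψs xb = ℓ
    have hpsixb : ψs xb = ℓ := by
      refine le_antisymm (by rw [hD] at hxbD; exact hxbD) ?_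
      by_contra hlt
      push_neg at hlt
      have hopen : IsOpen {x : EuclideanSpace ℝ (Fin d) | ψs x < ℓ} :=
        isOpen_lt hcont continuous_const
      have hsub : {x : EuclideanSpace ℝ (Fin d) | ψs x < ℓ} ⊆ D := by
        rw [hD]; exact fun x hx => (le_of_lt hx : ψs x ≤ ℓ)
      exact hint (interior_maximal hsub hopen hlt)
    set g := gradψs xb with hg
    -- g ≠ 0, via convexity and the Slater point
    have hgx0 : ⟪g, x₀ - xb⟫_ℝ < 0 := by
      have hq := dir_slope (hψs_grad xb) (x₀ - xb)
      have hub : ⟪g, x₀ - xb⟫_ℝ ≤ ψs x₀ - ψs xb := by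
        refine le_of_tendsto hq ?_
        filter_upwards [Ioo_mem_nhdsGT_of_mem (by norm_num : (0:ℝ) ∈ Set.Ico (0:ℝ) 1)]
          with t ht
        obtain ⟨ht0, ht1⟩ := ht
        have hconv := hψs_conv.2 (Set.mem_univ xb) (Set.mem_univ x₀)
          (by linarith : (0:ℝ) ≤ 1 - t) ht0.le (by ring)
        have heq : (1 - t) • xb + t • x₀ = xb + t • (x₀ - xb) := by module
        rw [heq] at hconv
        rw [div_le_iff₀ ht0]
        simp only [smul_eq_mul] at hconv
        nlinarith [hconv]
      linarith [hpsixb ▸ hub, hx₀]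
    have hgne : g ≠ 0 := by
      intro h0
      rw [h0] at hgx0
      simp at hgx0
    have hgg : (0:ℝ) < ⟪g, g⟫_ℝ := by
      have : ‖g‖ ≠ 0 := norm_ne_zero_iff.2 hgne
      rw [real_inner_self_eq_norm_sq]
      positivity
    -- key inequality: first-order optimality in inward directions
    have hA : ∀ w : EuclideanSpace ℝ (Fin d), ⟪g, w⟫_ℝ < 0 → ⟪θb - g, w⟫_ℝ ≤ 0 := by
      intro w hw
      have hq := dir_slope (hψs_grad xb) w
      have hev1 : ∀ᶠ t in 𝓝[>] (0:ℝ), (ψs (xb + t • w) - ψs xb) / t < 0 :=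
        hq.eventually (eventually_lt_nhds hw)
      have hev2 : ∀ᶠ t in 𝓝[>] (0:ℝ), ⟪θb, w⟫_ℝ ≤ (ψs (xb + t • w) - ψs xb) / t := by
        filter_upwards [hev1, self_mem_nhdsWithin] with t htneg ht0
        have ht0' : (0:ℝ) < t := ht0
        have hmem : xb + t • w ∈ D := by
          rw [hD]
          have := (div_neg_iff.1 htneg)
          rcases this with ⟨_, h⟩ | ⟨h, _⟩
          · linarith
          · have : ψs (xb + t • w) - ψs xb < 0 := h
            rw [Set.mem_setOf_eq]
            linarith [hpsixb]
        have := hmin hmem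
        simp only [hf, Set.mem_setOf_eq] at this
        rw [le_div_iff₀ ht0']
        have hip : ⟪θb, xb + t • w⟫_ℝ = ⟪θb, xb⟫_ℝ + t * ⟪θb, w⟫_ℝ := by
          rw [inner_add_right, real_inner_smul_right]
        have : ψs xb - ⟪θb, xb⟫_ℝ ≤ ψs (xb + t • w) - ⟪θb, xb + t • w⟫_ℝ := this
        rw [hip] at this
        linarith
      have hle : ⟪θb, w⟫_ℝ ≤ ⟪g, w⟫_ℝ := ge_of_tendsto hq hev2
      rw [inner_sub_left]
      linarith
    -- extend to the closed halfspace
    have hA' : ∀ w : EuclideanSpace ℝ (Fin d), ⟪g, w⟫_ℝ ≤ 0 → ⟪θb - g, w⟫_ℝ ≤ 0 := by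
      intro w hw
      have key : ∀ ε : ℝ, 0 < ε → ⟪θb - g, w⟫_ℝ ≤ ε * ⟪θb - g, g⟫_ℝ := by
        intro ε hε
        have h1 : ⟪g, w - ε • g⟫_ℝ < 0 := by
          rw [inner_sub_right, real_inner_smul_right]
          nlinarith
        have := hA _ h1
        rw [inner_sub_right, real_inner_smul_right] at this
        linarith
      have hlim : Tendsto (fun ε : ℝ => ε * ⟪θb - g, g⟫_ℝ) (𝓝[>] 0) (𝓝 0) := by
        have : Tendsto (fun ε : ℝ => ε * ⟪θb - g, g⟫_ℝ) (𝓝 0) (𝓝 (0 * ⟪θb - g, g⟫_ℝ)) :=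
          (continuous_id.mul continuous_const).tendsto 0
        simpa using this.mono_left nhdsWithin_le_nhds
      refine ge_of_tendsto hlim ?_
      filter_upwards [self_mem_nhdsWithin] with ε hε
      exact key ε hε
    set v := θb - g with hv
    set c : ℝ := ⟪v, g⟫_ℝ / ⟪g, g⟫_ℝ with hc
    set w := v - c • g with hw
    have hgw : ⟪g, w⟫_ℝ = 0 := by
      rw [hw, inner_sub_right, real_inner_smul_right, hc, real_inner_comm g v,
        div_mul_cancel₀ _ hgg.ne', sub_self]
    have hvw1 : ⟪v, w⟫_ℝ ≤ 0 := hA' w (le_of_eq hgw)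
    have hvw2 : ⟪v, -w⟫_ℝ ≤ 0 := hA' (-w) (by rw [inner_neg_right, hgw]; norm_num)
    have hvw : ⟪v, w⟫_ℝ = 0 := by
      rw [inner_neg_right] at hvw2
      linarith
    have hw0 : w = 0 := by
      have : ⟪w, w⟫_ℝ = 0 := by
        have hdecomp : v = w + c • g := by rw [hw]; module
        calc ⟪w, w⟫_ℝ = ⟪v, w⟫_ℝ - c * ⟪g, w⟫_ℝ := by
              rw [hdecomp, inner_add_left, real_inner_smul_left]; ring
          _ = 0 := by rw [hvw, hgw]; ring
      exact inner_self_eq_zero.1 this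
    have hveq : v = c • g := by
      have h := hw0
      rw [hw, sub_eq_zero] at h
      exact h
    have hc0 : 0 ≤ c := by
      have h := hA' (-g) (by rw [inner_neg_right]; linarith)
      rw [inner_neg_right] at h
      have hvg : 0 ≤ ⟪v, g⟫_ℝ := by linarith
      exact div_nonneg hvg hgg.le
    have hθ : θb = (1 + c) • g := by
      have h1 : θb = g + v := by rw [hv]; module
      rw [h1, hveq]; module
    have hnorm : ‖θb‖ = (1 + c) * ‖g‖ := by
      rw [hθ, norm_smul, Real.norm_eq_abs, abs_of_nonneg (by linarith)]
    have hbnd := hbd xb hfr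
    have hgpos : 0 < ‖g‖ := norm_pos_iff.2 hgne
    have hceq : c = 0 := le_antisymm (by nlinarith [hnorm ▸ hbnd]) hc0
    have : θb = g := by rw [hθ, hceq]; simp
    exact this.symm
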